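/- Let O be a finite set of objects, each with a class label, with at least one heterogeneous pair (pair of objects with distinct classes). For a subset A ⊆ O let P(A) denote the number of heterogeneous pairs within A. For an object x_i and a set of tests S, let N(x_i, S) be the set of objects agreeing with x_i on all tests in S. Then the function g_i(S) = (P(O) − P(N(x_i, S))) / P(O) is monotone non-decreasing and submodular, with g_i(∅) = 0 and 0 ≤ g_i(S) ≤ 1. -/
import Mathlib


/-- The number of heterogeneous (unordered) pairs in `A`. -/
def hetPairs {O C : Type*} [DecidableEq O] [DecidableEq C]
    (cls : O → C) (A : Finset O) : ℕ :=
  (A.offDiag.filter (fun p => cls p.1 ≠ cls p.2)).card / 2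

/-- The set of objects agreeing with `x` on all tests in `S`. -/
def agreeSet {O T V : Type*} [Fintype O] [DecidableEq V]
    (val : T → O → V) (x : O) (S : Finset T) : Finset O :=
  Finset.univ.filter (fun y => ∀ t ∈ S, val t y = val t x)

/-- The scaled heterogeneous-pair-exclusion function `g_i`. -/
noncomputable def pairExcl {O T C V : Type*} [Fintype O] [DecidableEq O] [DecidableEq C] [DecidableEq V]
    (cls : O → C) (val : T → O → V) (x : O) (S : Finset T) : ℝ :=
  ((hetPairs cls (Finset.univ : Finset O) : ℝ) - (hetPairs cls (agreeSet val x S) : ℝ)) /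
    (hetPairs cls (Finset.univ : Finset O) : ℝ)

/-- The double count of heterogeneous pairs. -/
def hetD {O C : Type*} [DecidableEq O] [DecidableEq C]
    (cls : O → C) (A : Finset O) : ℕ :=
  (A.offDiag.filter (fun p => cls p.1 ≠ cls p.2)).card

lemma hetD_even {O C : Type*} [DecidableEq O] [DecidableEq C]
    (cls : O → C) (A : Finset O) : Even (hetD cls A) := by
  classical
  letI : LinearOrder O := linearOrderOfSTO WellOrderingRel
  set s := A.offDiag.filter (fun p => cls p.1 ≠ cls p.2) with hs
  have hmem : ∀ p ∈ s, p.1 ∈ A ∧ p.2 ∈ A ∧ p.1 ≠ p.2 ∧ cls p.1 ≠ cls p.2 := by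
    intro p hp
    simp only [hs, Finset.mem_filter, Finset.mem_offDiag] at hp
    tauto
  have hswap : ∀ p ∈ s, p.swap ∈ s := by
    intro p hp
    obtain ⟨h1, h2, h3, h4⟩ := hmem p hp
    simp only [hs, Finset.mem_filter, Finset.mem_offDiag, Prod.fst_swap, Prod.snd_swap]
    exact ⟨⟨h2, h1, h3.symm⟩, h4.symm⟩
  have hsplit := Finset.card_filter_add_card_filter_not
    (s := s) (p := fun p => p.1 < p.2)
  have hbij : (s.filter (fun p => p.1 < p.2)).card
      = (s.filter (fun p => ¬ p.1 < p.2)).card := by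
    apply Finset.card_bij (fun p _ => p.swap)
    · intro p hp
      rw [Finset.mem_filter] at hp ⊢
      exact ⟨hswap p hp.1, by simpa using not_lt_of_gt hp.2⟩
    · intro p hp q hq h
      exact Prod.swap_injective h
    · intro q hq
      rw [Finset.mem_filter] at hq
      refine ⟨q.swap, Finset.mem_filter.mpr ⟨hswap q hq.1, ?_⟩, by simp⟩
      have hne := (hmem q hq.1).2.2.1
      have := hq.2
      simp only [Prod.fst_swap, Prod.snd_swap]
      exact lt_of_le_of_ne (not_lt.mp this) hne.symm
  refine ⟨(s.filter (fun p => p.1 < p.2)).card, ?_⟩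
  unfold hetD
  rw [← hs]
  omega

lemma hetPairs_eq {O C : Type*} [DecidableEq O] [DecidableEq C]
    (cls : O → C) (A : Finset O) : hetPairs cls A = hetD cls A / 2 := rfl

lemma hetD_mono {O C : Type*} [DecidableEq O] [DecidableEq C]
    (cls : O → C) {A B : Finset O} (h : A ⊆ B) : hetD cls A ≤ hetD cls B :=
  Finset.card_le_card (Finset.filter_subset_filter _ (Finset.offDiag_mono h))

lemma hetD_submod {O C : Type*} [DecidableEq O] [DecidableEq C]
    (cls : O → C) {A B : Finset O} (N : Finset O) (hBA : B ⊆ A) :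
    hetD cls B + hetD cls (A ∩ N) ≤ hetD cls A + hetD cls (B ∩ N) := by
  classical
  set P : O × O → Prop := fun p => cls p.1 ≠ cls p.2 with hP
  let f : Finset O → Finset (O × O) := fun X => X.offDiag.filter (fun p => cls p.1 ≠ cls p.2)
  have hunion : f B ∪ f (A ∩ N) ⊆ f A := by
    apply Finset.union_subset
    · exact Finset.filter_subset_filter _ (Finset.offDiag_mono hBA)
    · exact Finset.filter_subset_filter _ (Finset.offDiag_mono Finset.inter_subset_left)
  have hinter : f B ∩ f (A ∩ N) = f (B ∩ N) := by
    ext p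
    simp only [f, Finset.mem_inter, Finset.mem_filter, Finset.mem_offDiag]
    constructor
    · rintro ⟨⟨⟨h1, h2, h3⟩, h4⟩, ⟨⟨h5, h6, _⟩, _⟩⟩
      exact ⟨⟨⟨h1, h5.2⟩, ⟨h2, h6.2⟩, h3⟩, h4⟩
    · rintro ⟨⟨h1, h2, h3⟩, h4⟩
      exact ⟨⟨⟨h1.1, h2.1, h3⟩, h4⟩, ⟨⟨⟨hBA h1.1, h1.2⟩, ⟨hBA h2.1, h2.2⟩, h3⟩, h4⟩⟩
  have := Finset.card_union_add_card_inter (f B) (f (A ∩ N))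
  have hle : (f B ∪ f (A ∩ N)).card ≤ (f A).card := Finset.card_le_card hunion
  unfold hetD
  have h2 : (f B ∩ f (A ∩ N)).card = (f (B ∩ N)).card := by rw [hinter]
  show (f B).card + (f (A ∩ N)).card ≤ (f A).card + (f (B ∩ N)).card
  omega

lemma hetPairs_submod {O C : Type*} [DecidableEq O] [DecidableEq C]
    (cls : O → C) {A B : Finset O} (N : Finset O) (hBA : B ⊆ A) :
    hetPairs cls B + hetPairs cls (A ∩ N) ≤ hetPairs cls A + hetPairs cls (B ∩ N) := by
  have h := hetD_submod cls N hBA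
  have e1 := hetD_even cls A
  have e2 := hetD_even cls B
  have e3 := hetD_even cls (A ∩ N)
  have e4 := hetD_even cls (B ∩ N)
  rw [Nat.even_iff] at e1 e2 e3 e4
  simp only [hetPairs_eq]
  omega

lemma hetPairs_mono {O C : Type*} [DecidableEq O] [DecidableEq C]
    (cls : O → C) {A B : Finset O} (h : A ⊆ B) : hetPairs cls A ≤ hetPairs cls B :=
  Nat.div_le_div_right (hetD_mono cls h)

lemma agreeSet_anti {O T V : Type*} [Fintype O] [DecidableEq V]
    (val : T → O → V) (x : O) {S S' : Finset T} (h : S ⊆ S') :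
    agreeSet val x S' ⊆ agreeSet val x S := by
  intro y hy
  simp only [agreeSet, Finset.mem_filter, Finset.mem_univ, true_and] at hy ⊢
  exact fun t ht => hy t (h ht)

lemma agreeSet_insert {O T V : Type*} [Fintype O] [DecidableEq O] [DecidableEq V] [DecidableEq T]
    (val : T → O → V) (x : O) (S : Finset T) (t : T) :
    agreeSet val x (insert t S) = agreeSet val x S ∩ agreeSet val x {t} := by
  ext y
  simp only [agreeSet, Finset.mem_inter, Finset.mem_filter, Finset.mem_univ, true_and,
    Finset.mem_insert, Finset.mem_singleton]
  constructor
  · intro h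
    exact ⟨fun s hs => h s (Or.inr hs), fun s hs => hs ▸ h t (Or.inl rfl)⟩
  · rintro ⟨h1, h2⟩ s (rfl | hs)
    · exact h2 s rfl
    · exact h1 s hs

theorem pairExcl_monotone_submodular {O T C V : Type*}
    [Fintype O] [DecidableEq O] [Fintype T] [DecidableEq T] [DecidableEq C] [DecidableEq V]
    (cls : O → C) (val : T → O → V) (x : O)
    (hhet : 0 < hetPairs cls (Finset.univ : Finset O)) :
    (∀ S S' : Finset T, S ⊆ S' → pairExcl cls val x S ≤ pairExcl cls val x S') ∧
    (∀ (S S' : Finset T) (t : T), S ⊆ S' → t ∉ S' →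
      pairExcl cls val x (insert t S') - pairExcl cls val x S' ≤
        pairExcl cls val x (insert t S) - pairExcl cls val x S) ∧
    pairExcl cls val x ∅ = 0 ∧
    (∀ S : Finset T, 0 ≤ pairExcl cls val x S ∧ pairExcl cls val x S ≤ 1) := by
  set m : ℕ := hetPairs cls (Finset.univ : Finset O) with hm
  have hmR : (0 : ℝ) < (m : ℝ) := by exact_mod_cast hhet
  have hle : ∀ S : Finset T, hetPairs cls (agreeSet val x S) ≤ m :=
    fun S => hetPairs_mono cls (Finset.subset_univ _)
  refine ⟨?_, ?_, ?_, ?_⟩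
  · intro S S' hSS
    unfold pairExcl
    rw [div_le_div_iff_of_pos_right hmR]
    have : hetPairs cls (agreeSet val x S') ≤ hetPairs cls (agreeSet val x S) :=
      hetPairs_mono cls (agreeSet_anti val x hSS)
    have : (hetPairs cls (agreeSet val x S') : ℝ) ≤ (hetPairs cls (agreeSet val x S) : ℝ) := by
      exact_mod_cast this
    linarith
  · intro S S' t hSS _
    unfold pairExcl
    rw [div_sub_div_same, div_sub_div_same, div_le_div_iff_of_pos_right hmR]
    have key : hetPairs cls (agreeSet val x S') + hetPairs cls (agreeSet val x (insert t S))
        ≤ hetPairs cls (agreeSet val x S) + hetPairs cls (agreeSet val x (insert t S')) := by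
      rw [agreeSet_insert, agreeSet_insert]
      exact hetPairs_submod cls (agreeSet val x {t}) (agreeSet_anti val x hSS)
    have keyR : (hetPairs cls (agreeSet val x S') : ℝ) + hetPairs cls (agreeSet val x (insert t S))
        ≤ (hetPairs cls (agreeSet val x S) : ℝ) + hetPairs cls (agreeSet val x (insert t S')) := by
      exact_mod_cast key
    linarith
  · unfold pairExcl
    have : agreeSet val x (∅ : Finset T) = Finset.univ := by
      ext y; simp [agreeSet]
    rw [this, ← hm, sub_self, zero_div]
  · intro S
    unfold pairExcl
    constructor
    · apply div_nonneg _ hmR.le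
      have := hle S
      have : (hetPairs cls (agreeSet val x S) : ℝ) ≤ (m : ℝ) := by exact_mod_cast this
      linarith
    · rw [div_le_one hmR]
      have : (0 : ℝ) ≤ (hetPairs cls (agreeSet val x S) : ℝ) := Nat.cast_nonneg _
      linarith
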